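/- Let k ≥ 3. If u is a position with u ∉ P_m for every m ∈ ℕ, then u has a follower lying in P_n for some n ∈ ℕ; that is, from any position which is in no P_m there is a legal move to a position in some P_n. -/

import Mathlib

/-- `T n` is the `n`-th triangular number `n(n+1)/2`. -/
def T (n : ℕ) : ℕ := n * (n + 1) / 2

/-- `Pset k n` is the set `Pₙ` of positions `(T n, m₁, …, m_{k-1})` (nondecreasing
`k`-tuples) whose first component is `T n` and whose remaining components sum to
`(k-1)·T n + n` (each of them is automatically `≥ T n` by monotonicity). -/
def Pset (k : ℕ) [NeZero k] (n : ℕ) : Set (Fin k → ℕ) :=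
  {u | Monotone u ∧ u 0 = T n ∧
    ∑ i ∈ Finset.univ.erase 0, u i = (k - 1) * T n + n}

/-- A raw move of the `k`-heap game (before re-sorting): either (i) remove a positive
number of tokens from at least one and at most `k-1` heaps, or (ii) remove the same
positive number `t` of tokens from all `k` heaps (`t` at most the smallest heap). -/
def MoveRaw (k : ℕ) (u w : Fin k → ℕ) : Prop :=
  ((∀ i, w i ≤ u i) ∧ u ≠ w ∧
    (Finset.univ.filter fun i => w i < u i).card ≤ k - 1)
  ∨ (∃ t > 0, ∀ i, u i = w i + t)

/-- `v` is a follower of `u`: `v` is obtained from `u` by one move, with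
the components re-sorted into nondecreasing order. -/
def Follower (k : ℕ) (u v : Fin k → ℕ) : Prop :=
  ∃ w : Fin k → ℕ, MoveRaw k u w ∧ Monotone v ∧ ∃ σ : Equiv.Perm (Fin k), v = w ∘ σ

lemma two_T (n : ℕ) : 2 * T n = n * (n + 1) := by
  have h : 2 ∣ n * (n + 1) := n.even_mul_succ_self.two_dvd
  unfold T
  omega

lemma T_succ (n : ℕ) : T (n + 1) = T n + (n + 1) := by
  have h1 := two_T n
  have h2 := two_T (n + 1)
  have h3 : (n + 1) * (n + 1 + 1) = n * (n + 1) + 2 * (n + 1) := by ring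
  omega

lemma T_mono : Monotone T := by
  apply monotone_nat_of_le_succ
  intro n
  have := T_succ n
  omega

lemma le_T (n : ℕ) : n ≤ T n := by
  induction n with
  | zero => simp [T]
  | succ m ih => have := T_succ m; omega

lemma mem_Pset_of_total (k : ℕ) [NeZero k] (m : ℕ) (v : Fin k → ℕ)
    (hv : Monotone v) (h0 : v 0 = T m) (hs : ∑ i, v i = k * T m + m) :
    v ∈ Pset k m := by
  refine ⟨hv, h0, ?_⟩
  have hsplit := Finset.add_sum_erase Finset.univ v (Finset.mem_univ 0)
  have hk : 0 < k := Nat.pos_of_ne_zero (NeZero.ne k)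
  have hmul : (k - 1) * T m + T m = k * T m := by
    have : k - 1 + 1 = k := by omega
    calc (k - 1) * T m + T m = (k - 1 + 1) * T m := by ring
    _ = k * T m := by rw [this]
  omega

lemma fill {ι : Type*} [DecidableEq ι] (s : Finset ι) (g : ι → ℕ) (L : ℕ) :
    ∀ t : ℕ, (∀ i ∈ s, L ≤ g i) → s.card * L ≤ t → t ≤ ∑ i ∈ s, g i →
    ∃ f : ι → ℕ, (∀ i ∈ s, L ≤ f i) ∧ (∀ i, f i ≤ g i) ∧ (∀ i ∉ s, f i = g i) ∧
      ∑ i ∈ s, f i = t := by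
  induction s using Finset.induction_on with
  | empty =>
    intro t _ _ h2
    simp only [Finset.sum_empty, Nat.le_zero] at h2
    exact ⟨g, by simp, fun i => le_refl _, fun i _ => rfl, by simp [h2]⟩
  | insert _ _ ha ih =>
    rename_i a s
    intro t hg h1 h2
    have hga : L ≤ g a := hg a (Finset.mem_insert_self a s)
    rw [Finset.card_insert_of_notMem ha] at h1
    rw [Finset.sum_insert ha] at h2
    have hsg : s.card * L ≤ ∑ i ∈ s, g i := by
      have := Finset.card_nsmul_le_sum s g L (fun i hi => hg i (Finset.mem_insert_of_mem hi))
      simpa [smul_eq_mul] using this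
    have h1' : s.card * L + L ≤ t := by
      have : (s.card + 1) * L = s.card * L + L := by ring
      omega
    -- choose ta
    rcases le_total (g a) (t - s.card * L) with hle | hle
    · -- ta = g a
      obtain ⟨f, hfL, hfle, hfout, hfsum⟩ :=
        ih (t - g a) (fun i hi => hg i (Finset.mem_insert_of_mem hi)) (by omega) (by omega)
      refine ⟨Function.update f a (g a), ?_, ?_, ?_, ?_⟩
      · intro i hi
        rcases Finset.mem_insert.mp hi with rfl | hi2
        · rw [Function.update_self]; exact hga
        · rw [Function.update_of_ne (by rintro rfl; exact ha hi2)]; exact hfL i hi2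
      · intro i
        rcases eq_or_ne i a with rfl | hne
        · rw [Function.update_self]
        · rw [Function.update_of_ne hne]; exact hfle i
      · intro i hi
        have hia : i ≠ a := fun he => hi (he ▸ Finset.mem_insert_self a s)
        rw [Function.update_of_ne hia]
        exact hfout i (fun hmem => hi (Finset.mem_insert_of_mem hmem))
      · rw [Finset.sum_insert ha, Function.update_self]
        have : ∑ i ∈ s, Function.update f a (g a) i = ∑ i ∈ s, f i :=
          Finset.sum_congr rfl (fun i hi => Function.update_of_ne (by rintro rfl; exact ha hi) _ _)
        omega
    · -- ta = t - s.card * L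
      obtain ⟨f, hfL, hfle, hfout, hfsum⟩ :=
        ih (s.card * L) (fun i hi => hg i (Finset.mem_insert_of_mem hi)) (le_refl _) hsg
      refine ⟨Function.update f a (t - s.card * L), ?_, ?_, ?_, ?_⟩
      · intro i hi
        rcases Finset.mem_insert.mp hi with rfl | hi2
        · rw [Function.update_self]; omega
        · rw [Function.update_of_ne (by rintro rfl; exact ha hi2)]; exact hfL i hi2
      · intro i
        rcases eq_or_ne i a with rfl | hne
        · rw [Function.update_self]; omega
        · rw [Function.update_of_ne hne]; exact hfle i
      · intro i hi
        have hia : i ≠ a := fun he => hi (he ▸ Finset.mem_insert_self a s)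
        rw [Function.update_of_ne hia]
        exact hfout i (fun hmem => hi (Finset.mem_insert_of_mem hmem))
      · rw [Finset.sum_insert ha, Function.update_self]
        have : ∑ i ∈ s, Function.update f a (t - s.card * L) i = ∑ i ∈ s, f i :=
          Finset.sum_congr rfl (fun i hi => Function.update_of_ne (by rintro rfl; exact ha hi) _ _)
        omega

lemma reach (k : ℕ) [NeZero k] (u w : Fin k → ℕ) (m : ℕ)
    (hmove : MoveRaw k u w) (hlb : ∀ i, T m ≤ w i) (hj : ∃ j, w j = T m)
    (hsum : ∑ i, w i = k * T m + m) :
    ∃ v, Follower k u v ∧ v ∈ Pset k m := by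
  obtain ⟨j, hjw⟩ := hj
  set σ := Tuple.sort w with hσ
  have hmono : Monotone (w ∘ σ) := Tuple.monotone_sort w
  refine ⟨w ∘ σ, ⟨w, hmove, hmono, σ, rfl⟩, ?_⟩
  have hv0 : (w ∘ σ) 0 = T m := by
    refine le_antisymm ?_ (hlb _)
    have h1 : (w ∘ σ) 0 ≤ (w ∘ σ) (σ.symm j) := hmono (Fin.zero_le _)
    simpa [Function.comp, hjw] using h1
  refine mem_Pset_of_total k m _ hmono hv0 ?_
  have : ∑ i, (w ∘ σ) i = ∑ i, w i := Equiv.sum_comp σ w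
  omega

/-- part (II) of the proof of Theorem 1: from any position lying in
no `Pₘ` there is a legal move to a position in some `Pₙ`. -/
theorem non_P_has_P_follower (k : ℕ) [NeZero k] (hk : 3 ≤ k)
    (u : Fin k → ℕ) (hu : Monotone u) (h : ∀ m, u ∉ Pset k m) :
    ∃ v, Follower k u v ∧ ∃ n, v ∈ Pset k n := by
  have hmul1 : ∀ A : ℕ, (k - 1) * A + A = k * A := by
    intro A
    have hh : k - 1 + 1 = k := by omega
    calc (k - 1) * A + A = (k - 1 + 1) * A := by ring
    _ = k * A := by rw [hh]
  have hmul2 : ∀ A : ℕ, (k - 2) * A + A = (k - 1) * A := by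
    intro A
    have hh : k - 2 + 1 = k - 1 := by omega
    calc (k - 2) * A + A = (k - 2 + 1) * A := by ring
    _ = (k - 1) * A := by rw [hh]
  have hu0le : ∀ i, u 0 ≤ u i := fun i => hu (Fin.zero_le i)
  have hSge : k * u 0 ≤ ∑ i, u i := by
    calc k * u 0 = ∑ _i : Fin k, u 0 := by
          simp [Finset.sum_const, Finset.card_univ, mul_comm]
    _ ≤ ∑ i, u i := Finset.sum_le_sum fun i _ => hu0le i
  obtain ⟨m0, hSeq⟩ : ∃ m0, ∑ i, u i = k * u 0 + m0 :=
    ⟨(∑ i, u i) - k * u 0, by omega⟩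
  by_cases hcase : T m0 ≤ u 0
  · rcases eq_or_lt_of_le hcase with heq | hlt
    · -- u itself would be in Pset k m0 : contradiction
      exact absurd (mem_Pset_of_total k m0 u hu heq.symm (by rw [heq]; omega)) (h m0)
    · -- move (ii): remove t from every heap
      obtain ⟨t, ht, htpos⟩ : ∃ t, u 0 = T m0 + t ∧ 0 < t :=
        ⟨u 0 - T m0, by omega, by omega⟩
      have htle : ∀ i, t ≤ u i := fun i => le_trans (by omega) (hu0le i)
      have hkt : k * t + k * T m0 = k * u 0 := by
        rw [← Nat.mul_add]
        congr 1
        omega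
      obtain ⟨v, hf, hv⟩ := reach k u (fun i => u i - t) m0
        (Or.inr ⟨t, htpos, fun i => by
          have h2 := htle i
          show u i = u i - t + t
          omega⟩)
        (fun i => by
          have h1 := hu0le i
          have h2 := htle i
          show T m0 ≤ u i - t
          omega)
        ⟨0, by show u 0 - t = T m0; omega⟩
        (by
          show (∑ i, (u i - t)) = k * T m0 + m0
          have hsum : (∑ i, (u i - t)) + ∑ _i : Fin k, t = ∑ i, u i := by
            rw [← Finset.sum_add_distrib]
            exact Finset.sum_congr rfl fun i _ => by have := htle i; omega
          have hconst : ∑ _i : Fin k, t = k * t := by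
            simp [Finset.sum_const, Finset.card_univ, mul_comm]
          omega)
      exact ⟨v, hf, m0, hv⟩
  · push_neg at hcase  -- u 0 < T m0
    have hP0 : T 0 ≤ u 0 := by simp [T]
    set n := Nat.findGreatest (fun m => T m ≤ u 0) (u 0) with hn
    have hTn : T n ≤ u 0 := Nat.findGreatest_spec (P := fun m => T m ≤ u 0) (Nat.zero_le (u 0)) hP0
    have hub : u 0 < T (n + 1) := by
      by_cases hnb : n + 1 ≤ u 0
      · have hgr := Nat.findGreatest_is_greatest (P := fun m => T m ≤ u 0)
          (n := u 0) (k := n + 1) (by omega) hnb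
        omega
      · have := le_T (n + 1)
        omega
    have hTsn := T_succ n
    have hu0ub : u 0 ≤ T n + n := by omega
    -- the total sum is big
    have hSbig : u 0 + ((k - 1) * T n + n) ≤ ∑ i, u i := by
      by_contra hSc
      push_neg at hSc
      have hmono1 : (k - 1) * T n ≤ (k - 1) * u 0 := Nat.mul_le_mul_left _ hTn
      have hm0n : m0 < n := by
        have h1 := hmul1 (u 0)
        omega
      have hn1 : 1 ≤ n := by omega
      have hTm0 : T m0 ≤ T (n - 1) := T_mono (by omega)
      have hTn1 : T (n - 1) + n = T n := by
        have h2 := T_succ (n - 1)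
        have hnn : n - 1 + 1 = n := by omega
        rw [hnn] at h2
        omega
      omega
    -- index 1 and the rest-set s
    have hk1 : 1 < k := by omega
    set i1 : Fin k := ⟨1, hk1⟩ with hi1
    have h0val : ((0 : Fin k)).val = 0 := Fin.val_zero k
    have h10 : i1 ≠ 0 := by
      intro he
      have hvv : (i1 : Fin k).val = ((0 : Fin k)).val := by rw [he]
      rw [h0val, hi1] at hvv
      simp at hvv
    have hmem1 : i1 ∈ Finset.univ.erase (0 : Fin k) :=
      Finset.mem_erase.mpr ⟨h10, Finset.mem_univ _⟩
    set s : Finset (Fin k) := (Finset.univ.erase 0).erase i1 with hs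
    have hsplit : ∀ f : Fin k → ℕ, ∑ i, f i = f 0 + (f i1 + ∑ i ∈ s, f i) := by
      intro f
      rw [hs, ← Finset.add_sum_erase _ f (Finset.mem_univ (0 : Fin k)),
          ← Finset.add_sum_erase _ f hmem1]
    have hscard : s.card = k - 2 := by
      rw [hs, Finset.card_erase_of_mem hmem1, Finset.card_erase_of_mem (Finset.mem_univ _),
        Finset.card_univ, Fintype.card_fin]
      omega
    have hns : (0 : Fin k) ∉ s := by
      intro hmem
      rw [hs] at hmem
      exact (Finset.mem_erase.mp ((Finset.mem_erase.mp hmem).2)).1 rfl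
    have hi1ns : i1 ∉ s := by
      intro hmem
      rw [hs] at hmem
      exact (Finset.mem_erase.mp hmem).1 rfl
    have hmems : ∀ i : Fin k, i ≠ 0 → i ≠ i1 → i ∈ s := by
      intro i hi0 hii1
      rw [hs]
      exact Finset.mem_erase.mpr ⟨hii1, Finset.mem_erase.mpr ⟨hi0, Finset.mem_univ _⟩⟩
    have hu01 : u 0 ≤ u i1 := hu0le i1
    have hsl : ∀ i ∈ s, u i1 ≤ u i := by
      intro i hi
      rw [hs] at hi
      apply hu
      have h1 : i ≠ i1 := (Finset.mem_erase.mp hi).1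
      have h2 : i ≠ 0 := (Finset.mem_erase.mp ((Finset.mem_erase.mp hi).2)).1
      have hv0 : i.val ≠ 0 := fun hv => h2 (Fin.ext (by rw [hv, h0val]))
      have hv1 : i.val ≠ 1 := fun hv => h1 (Fin.ext (by rw [hv, hi1]))
      rw [Fin.le_def, hi1]
      simp
      omega
    by_cases hu1 : u i1 ≤ T n + n
    · -- fix heap i1, set heap 0 to T n, fill the rest
      obtain ⟨f, hfL, hfle, hfout, hfsum⟩ := fill s u (T n) ((k - 1) * T n + n - u i1)
        (fun i _ => le_trans hTn (hu0le i))
        (by rw [hscard]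
            have h1 := hmul2 (T n)
            omega)
        (by have h1 := hsplit u
            omega)
      have hf1 : f i1 = u i1 := hfout i1 hi1ns
      set w := Function.update f 0 (T n) with hw
      have hw0 : w 0 = T n := Function.update_self _ _ _
      have hwi1 : w i1 = u i1 := by rw [hw, Function.update_of_ne h10, hf1]
      have hws : ∀ i ∈ s, w i = f i := fun i hi =>
        Function.update_of_ne (by rintro rfl; exact hns hi) _ _
      have hle1 : u i1 ≤ (k - 1) * T n + n := by
        have h4 := hmul2 (T n)
        omega
      have hwsum : ∑ i, w i = k * T n + n := by
        have h1 := hsplit w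
        have h2 : ∑ i ∈ s, w i = ∑ i ∈ s, f i := Finset.sum_congr rfl hws
        have h3 := hmul1 (T n)
        omega
      have hwle : ∀ i, w i ≤ u i := by
        intro i
        rcases eq_or_ne i 0 with rfl | hne
        · rw [hw0]; exact hTn
        · rw [hw, Function.update_of_ne hne]; exact hfle i
      have hwne : u ≠ w := by
        intro he
        apply h n
        refine mem_Pset_of_total k n u hu ?_ ?_
        · rw [he, hw0]
        · rw [he]; exact hwsum
      have hfilter : (Finset.univ.filter fun i => w i < u i).card ≤ k - 1 := by
        have hsub : (Finset.univ.filter fun i => w i < u i) ⊆ Finset.univ.erase i1 := by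
          intro i hi
          rw [Finset.mem_filter] at hi
          refine Finset.mem_erase.mpr ⟨?_, Finset.mem_univ _⟩
          rintro rfl
          rw [hwi1] at hi
          omega
        calc _ ≤ (Finset.univ.erase i1).card := Finset.card_le_card hsub
        _ = k - 1 := by
          rw [Finset.card_erase_of_mem (Finset.mem_univ _), Finset.card_univ,
            Fintype.card_fin]
      obtain ⟨v, hf, hv⟩ := reach k u w n
        (Or.inl ⟨hwle, hwne, hfilter⟩)
        (by intro i
            rcases eq_or_ne i 0 with rfl | hne0
            · rw [hw0]
            · rcases eq_or_ne i i1 with rfl | hne1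
              · rw [hwi1]; omega
              · rw [hws i (hmems i hne0 hne1)]; exact hfL i (hmems i hne0 hne1))
        ⟨0, hw0⟩ hwsum
      exact ⟨v, hf, n, hv⟩
    · push_neg at hu1  -- T n + n < u i1
      have hsl2 : ∀ i ∈ s, T n + n + 1 ≤ u i := fun i hi => le_trans (by omega) (hsl i hi)
      have hslsum : s.card * (T n + n + 1) ≤ ∑ i ∈ s, u i := by
        have h1 := Finset.card_nsmul_le_sum s u (T n + n + 1) hsl2
        simpa [smul_eq_mul] using h1
      obtain ⟨f, hfL, hfle, hfout, hfsum⟩ := fill s u (T n) ((k - 1) * T n + n - u 0)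
        (fun i _ => le_trans hTn (hu0le i))
        (by rw [hscard]
            have h1 := hmul2 (T n)
            omega)
        (by rw [hscard] at hslsum
            have h1 : (k - 2) * (T n + n + 1) = (k - 2) * T n + (k - 2) * (n + 1) := by ring
            have h2 : (n + 1) ≤ (k - 2) * (n + 1) := Nat.le_mul_of_pos_left _ (by omega)
            have h3 := hmul2 (T n)
            omega)
      have hf0 : f 0 = u 0 := hfout 0 hns
      set w := Function.update f i1 (T n) with hw
      have hwi1 : w i1 = T n := Function.update_self _ _ _
      have hw0 : w 0 = u 0 := by rw [hw, Function.update_of_ne (Ne.symm h10), hf0]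
      have hws : ∀ i ∈ s, w i = f i := fun i hi =>
        Function.update_of_ne (by rintro rfl; exact hi1ns hi) _ _
      have hle1 : u 0 ≤ (k - 1) * T n + n := by
        have h4 := hmul2 (T n)
        omega
      have hwsum : ∑ i, w i = k * T n + n := by
        have h1 := hsplit w
        have h2 : ∑ i ∈ s, w i = ∑ i ∈ s, f i := Finset.sum_congr rfl hws
        have h3 := hmul1 (T n)
        omega
      have hwle : ∀ i, w i ≤ u i := by
        intro i
        rcases eq_or_ne i i1 with rfl | hne
        · rw [hwi1]; omega
        · rw [hw, Function.update_of_ne hne]; exact hfle i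
      have hwne : u ≠ w := by
        intro he
        have : u i1 = w i1 := by rw [he]
        rw [hwi1] at this
        omega
      have hfilter : (Finset.univ.filter fun i => w i < u i).card ≤ k - 1 := by
        have hsub : (Finset.univ.filter fun i => w i < u i) ⊆ Finset.univ.erase 0 := by
          intro i hi
          rw [Finset.mem_filter] at hi
          refine Finset.mem_erase.mpr ⟨?_, Finset.mem_univ _⟩
          rintro rfl
          rw [hw0] at hi
          omega
        calc _ ≤ (Finset.univ.erase (0 : Fin k)).card := Finset.card_le_card hsub
        _ = k - 1 := by
          rw [Finset.card_erase_of_mem (Finset.mem_univ _), Finset.card_univ,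
            Fintype.card_fin]
      obtain ⟨v, hf, hv⟩ := reach k u w n
        (Or.inl ⟨hwle, hwne, hfilter⟩)
        (by intro i
            rcases eq_or_ne i i1 with rfl | hne1
            · rw [hwi1]
            · rcases eq_or_ne i 0 with rfl | hne0
              · rw [hw0]; exact hTn
              · rw [hws i (hmems i hne0 hne1)]; exact hfL i (hmems i hne0 hne1))
        ⟨i1, hwi1⟩ hwsum
      exact ⟨v, hf, n, hv⟩
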